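/- Let n ≥ 3 be an integer. Given a tree structure Y ∈ 𝔗_n, a proper substructure X of Y (the induced structure on a proper subset of Y), and an integer h ≥ 1, there exist a tree structure Z ∈ 𝔗_n and an embedding j : X → Z that admits at least h pairwise distinct extensions to embeddings Y → Z (i.e. at least h distinct embeddings f : Y → Z whose restriction to X equals j). -/

import Mathlib

/-! # Relational structures, embeddings, amalgamations, Fraïssé classes -/

namespace Paper

/-- A relational signature: a set `I` of relation symbols with arities `≥ 1`. -/
structure Signature : Type 1 where
  I : Type
  arity : I → ℕ
  arity_pos : ∀ i, 1 ≤ arity i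

variable {σ : Signature}

/-- A (finite relational) structure for the signature `σ`. -/
structure Struc (σ : Signature) : Type 1 where
  carrier : Type
  [fin : Finite carrier]
  rel : ∀ i : σ.I, (Fin (σ.arity i) → carrier) → Prop

attribute [instance] Struc.fin

/-- An embedding of structures: an injection under which the relations on the source are
exactly the restrictions of the relations on the target. -/
structure Emb (X Y : Struc σ) : Type where
  toFun : X.carrier → Y.carrier
  inj : Function.Injective toFun
  rel_iff : ∀ (i : σ.I) (v : Fin (σ.arity i) → X.carrier),
    Y.rel i (fun j => toFun (v j)) ↔ X.rel i v

/-- The identity embedding. -/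
def Emb.id (X : Struc σ) : Emb X X where
  toFun := fun x => x
  inj := fun _ _ h => h
  rel_iff := fun _ _ => Iff.rfl

/-- Composition of embeddings. -/
def Emb.comp {X Y Z : Struc σ} (g : Emb Y Z) (f : Emb X Y) : Emb X Z where
  toFun := fun x => g.toFun (f.toFun x)
  inj := fun _ _ h => f.inj (g.inj h)
  rel_iff := fun i v => (g.rel_iff i fun j => f.toFun (v j)).trans (f.rel_iff i v)

/-- An embedding is an isomorphism if it is surjective. -/
def Emb.IsIso {X Y : Struc σ} (f : Emb X Y) : Prop := Function.Surjective f.toFun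

/-- Two structures are isomorphic. -/
def StrucIso (X Y : Struc σ) : Prop := ∃ f : Emb X Y, f.IsIso

theorem strucIso_refl (X : Struc σ) : StrucIso X X := ⟨Emb.id X, fun y => ⟨y, rfl⟩⟩

/-- The induced structure on a subset of the carrier. -/
def Struc.restrict (X : Struc σ) (S : Set X.carrier) : Struc σ where
  carrier := S
  rel := fun i v => X.rel i (fun j => (v j : X.carrier))

/-- The inclusion embedding of an induced substructure into the whole structure. -/
def Struc.subEmb (X : Struc σ) (S : Set X.carrier) : Emb (X.restrict S) X where
  toFun := fun a => a.1
  inj := fun _ _ h => Subtype.ext h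
  rel_iff := fun _ _ => Iff.rfl

/-- The inclusion embedding between induced substructures on nested subsets. -/
def Struc.inclEmb (X : Struc σ) {S T : Set X.carrier} (h : S ⊆ T) :
    Emb (X.restrict S) (X.restrict T) where
  toFun := fun a => ⟨a.1, h a.2⟩
  inj := fun a b hab => Subtype.ext (Subtype.mk_eq_mk.mp (by exact hab))
  rel_iff := fun _ _ => Iff.rfl

/-- An amalgamation of `Y₁` and `Y₂` over `X` (along `i₁`, `i₂`). -/
structure Amalg {X Y₁ Y₂ : Struc σ} (i₁ : Emb X Y₁) (i₂ : Emb X Y₂) : Type 1 where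
  Z : Struc σ
  j₁ : Emb Y₁ Z
  j₂ : Emb Y₂ Z
  comm : ∀ x, j₁.toFun (i₁.toFun x) = j₂.toFun (i₂.toFun x)
  surj : ∀ z, z ∈ Set.range j₁.toFun ∪ Set.range j₂.toFun

/-- Isomorphism of amalgamations: a structure isomorphism commuting with the two
embeddings. -/
def Amalg.Iso {X Y₁ Y₂ : Struc σ} {i₁ : Emb X Y₁} {i₂ : Emb X Y₂}
    (A B : Amalg i₁ i₂) : Prop :=
  ∃ f : Emb A.Z B.Z, f.IsIso ∧ (∀ y, f.toFun (A.j₁.toFun y) = B.j₁.toFun y) ∧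
    (∀ y, f.toFun (A.j₂.toFun y) = B.j₂.toFun y)

/-- A structure lies in the class `F` up to isomorphism. -/
def MemUpIso (F : Set (Struc σ)) (X : Struc σ) : Prop := ∃ W ∈ F, StrucIso X W

theorem memUpIso_of_mem {F : Set (Struc σ)} {X : Struc σ} (h : X ∈ F) : MemUpIso F X :=
  ⟨X, h, strucIso_refl X⟩

/-- A Fraïssé class. -/
structure IsFraisse (F : Set (Struc σ)) : Prop where
  nonempty : F.Nonempty
  finClasses : ∀ n : ℕ, ∃ (m : ℕ) (r : Fin m → Struc σ),
    ∀ X ∈ F, Nat.card X.carrier = n → ∃ α, StrucIso X (r α)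
  hereditary : ∀ X ∈ F, ∀ Y : Struc σ, Nonempty (Emb Y X) → MemUpIso F Y
  amalg : ∀ (X Y₁ Y₂ : Struc σ), X ∈ F → Y₁ ∈ F → Y₂ ∈ F →
    ∀ (i₁ : Emb X Y₁) (i₂ : Emb X Y₂), ∃ A : Amalg i₁ i₂, MemUpIso F A.Z

theorem pair_compl_subset_left {α : Type*} (a b : α) : ({a, b} : Set α)ᶜ ⊆ ({a} : Set α)ᶜ :=
  Set.compl_subset_compl.mpr (fun _ hx => Set.mem_insert_iff.mpr (Or.inl hx))

theorem pair_compl_subset_right {α : Type*} (a b : α) : ({a, b} : Set α)ᶜ ⊆ ({b} : Set α)ᶜ :=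
  Set.compl_subset_compl.mpr (fun _ hx => Set.mem_insert_iff.mpr (Or.inr hx))

/-- The canonical amalgamation of `X∖{a}` and `X∖{b}` over `X∖{a,b}`, namely `X` itself. -/
def canonAmalg (X : Struc σ) (a b : X.carrier) (hab : a ≠ b) :
    Amalg (X.inclEmb (pair_compl_subset_left a b)) (X.inclEmb (pair_compl_subset_right a b)) where
  Z := X
  j₁ := X.subEmb ({a} : Set X.carrier)ᶜ
  j₂ := X.subEmb ({b} : Set X.carrier)ᶜ
  comm := fun _ => rfl
  surj := fun z => by
    by_cases hz : z = a
    · exact Or.inr ⟨⟨z, by simp only [Set.mem_compl_iff, Set.mem_singleton_iff, hz]; exact hab⟩, rfl⟩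
    · exact Or.inl ⟨⟨z, by simp [hz]⟩, rfl⟩

/-- Two distinct elements `a b` of `X` are separated (relative to the class `F`) if `X` is,
up to isomorphism of amalgamations, the unique amalgamation of `X∖{a}` and `X∖{b}` over
`X∖{a,b}` lying in `F`. -/
def Separated (F : Set (Struc σ)) (X : Struc σ) (a b : X.carrier) (hab : a ≠ b) : Prop :=
  ∀ A : Amalg (X.inclEmb (pair_compl_subset_left a b)) (X.inclEmb (pair_compl_subset_right a b)),
    MemUpIso F A.Z → A.Iso (canonAmalg X a b hab)

/-- Stably separated: every embedding into a member of `F` sends `a`, `b` to separated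
elements. -/
def StablySeparated (F : Set (Struc σ)) (X : Struc σ) (a b : X.carrier) (hab : a ≠ b) : Prop :=
  ∀ X' : Struc σ, MemUpIso F X' → ∀ f : Emb X X',
    Separated F X' (f.toFun a) (f.toFun b) (fun h => hab (f.inj h))

/-- Isomorphism of marked structures. -/
def MarkedIso (X : Struc σ) (a : X.carrier) (Y : Struc σ) (b : Y.carrier) : Prop :=
  ∃ f : Emb X Y, f.IsIso ∧ f.toFun a = b

/-- `b` is extraneous in the marked structure `(X, a)` if it is separated from `a`. -/
def Extraneous (F : Set (Struc σ)) (X : Struc σ) (a b : X.carrier) : Prop :=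
  ∃ h : a ≠ b, Separated F X a b h

/-- A marked structure is minimal if it has no extraneous elements. -/
def MinimalMarked (F : Set (Struc σ)) (X : Struc σ) (a : X.carrier) : Prop :=
  ∀ b : X.carrier, ¬ Extraneous F X a b

/-- `f : W → X` is a one-point extension missing exactly `a`. -/
def IsOnePointExt {W X : Struc σ} (f : Emb W X) (a : X.carrier) : Prop :=
  Set.range f.toFun = ({a} : Set X.carrier)ᶜ

end Paper

/-! # Trees and tree structures -/

namespace Paper

/-- A finite tree: a finite connected acyclic simple graph. -/
structure FinTree : Type 1 where
  V : Type
  [fin : Fintype V]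
  [dec : DecidableEq V]
  G : SimpleGraph V
  [adjDec : DecidableRel G.Adj]
  isTree : G.IsTree

attribute [instance] FinTree.fin FinTree.dec FinTree.adjDec

/-- A leaf is a vertex of valence `≤ 1` (in a tree with at least two vertices this is the
same as valence exactly `1`; in a tree with at most two vertices every vertex is a leaf). -/
def FinTree.IsLeaf (T : FinTree) (v : T.V) : Prop := T.G.degree v ≤ 1

instance (T : FinTree) : DecidablePred T.IsLeaf := fun v => by
  unfold FinTree.IsLeaf; infer_instance

/-- A node is a vertex which is not a leaf. -/
def FinTree.IsNode (T : FinTree) (v : T.V) : Prop := ¬ T.IsLeaf v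

/-- A tree is reduced if it has no node of valence 2. -/
def FinTree.Reduced (T : FinTree) : Prop := ∀ v : T.V, T.G.degree v ≠ 2

/-- The quaternary relation on the vertices of a tree: the four vertices are pairwise
distinct and the path from `x₁` to `x₂` has a common edge with the path from `y₁` to
`y₂`. -/
def FinTree.pathRel (T : FinTree) (x₁ x₂ y₁ y₂ : T.V) : Prop :=
  ([x₁, x₂, y₁, y₂] : List T.V).Nodup ∧
  ∃ (p : T.G.Walk x₁ x₂) (q : T.G.Walk y₁ y₂), p.IsPath ∧ q.IsPath ∧
    ∃ e : Sym2 T.V, e ∈ p.edges ∧ e ∈ q.edges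

/-- The signature of tree structures: a single quaternary relation. -/
abbrev treeSig : Signature where
  I := Unit
  arity := fun _ => 4
  arity_pos := fun _ => by norm_num

/-- The leaf structure `L(T)` of a tree `T`: the set of leaves together with the quaternary
relation `R(x₁,x₂;y₁,y₂)` expressing that the paths `x₁–x₂` and `y₁–y₂` share an edge. -/
def FinTree.leafStruc (T : FinTree) : Struc treeSig where
  carrier := {v : T.V // T.IsLeaf v}
  rel := fun _ v => T.pathRel (v 0).1 (v 1).1 (v 2).1 (v 3).1

/-- The class `𝔗` of all tree structures (together with the empty structure, the leaf
structure of the empty tree). -/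
def TreeClass : Set (Struc treeSig) :=
  {A | IsEmpty A.carrier ∨ ∃ T : FinTree, StrucIso A T.leafStruc}

/-- The level of a tree is at most `n`: every vertex has valence at most `n`. -/
def FinTree.LevelLe (T : FinTree) (n : ℕ) : Prop := ∀ v : T.V, T.G.degree v ≤ n

/-- The class `𝔗_n` of tree structures of level at most `n`. -/
def TreeClassN (n : ℕ) : Set (Struc treeSig) :=
  {A | IsEmpty A.carrier ∨ ∃ T : FinTree, T.LevelLe n ∧ StrucIso A T.leafStruc}

theorem leafStruc_mem_treeClass (T : FinTree) : T.leafStruc ∈ TreeClass :=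
  Or.inr ⟨T, strucIso_refl _⟩

/-- The set of leaves of a tree. -/
def FinTree.leafFinset (T : FinTree) : Finset T.V := Finset.univ.filter T.IsLeaf

/-- The number of leaves, `ℓ(T)`. -/
def FinTree.nLeaves (T : FinTree) : ℕ := T.leafFinset.card

/-- The set of nodes of a tree. -/
def FinTree.nodeFinset (T : FinTree) : Finset T.V := Finset.univ.filter (fun v => ¬ T.IsLeaf v)

/-- The number of nodes, `n(T)`. -/
def FinTree.nNodes (T : FinTree) : ℕ := T.nodeFinset.card

end Paper

namespace Paper

/-! ## Auxiliary development for the proof -/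

open SimpleGraph

section Graft

variable {α β : Type} (G : SimpleGraph α) (H : SimpleGraph β) (v : α) (r : β)

/-- Graft two graphs along a single cross edge `inl v — inr r`. -/
def graft : SimpleGraph (α ⊕ β) where
  Adj x y := match x, y with
    | .inl a, .inl b => G.Adj a b
    | .inl a, .inr b => a = v ∧ b = r
    | .inr a, .inl b => a = r ∧ b = v
    | .inr a, .inr b => H.Adj a b
  symm := by
    constructor
    rintro (a | a) (b | b) h
    · exact h.symm
    · exact ⟨h.2, h.1⟩
    · exact ⟨h.2, h.1⟩
    · exact h.symm
  loopless := by
    constructor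
    rintro (a | a) h
    · exact G.loopless.irrefl a h
    · exact H.loopless.irrefl a h

variable {G H v r}

@[simp] lemma graft_adj_inl_inl {a b : α} : (graft G H v r).Adj (.inl a) (.inl b) ↔ G.Adj a b :=
  Iff.rfl

@[simp] lemma graft_adj_inl_inr {a : α} {b : β} :
    (graft G H v r).Adj (.inl a) (.inr b) ↔ a = v ∧ b = r := Iff.rfl

@[simp] lemma graft_adj_inr_inl {a : β} {b : α} :
    (graft G H v r).Adj (.inr a) (.inl b) ↔ a = r ∧ b = v := Iff.rfl

@[simp] lemma graft_adj_inr_inr {a b : β} : (graft G H v r).Adj (.inr a) (.inr b) ↔ H.Adj a b :=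
  Iff.rfl

instance graft.adjDecidable [DecidableEq α] [DecidableEq β]
    [DecidableRel G.Adj] [DecidableRel H.Adj] : DecidableRel (graft G H v r).Adj := by
  rintro (a | a) (b | b)
  · exact decidable_of_iff _ graft_adj_inl_inl.symm
  · exact decidable_of_iff _ graft_adj_inl_inr.symm
  · exact decidable_of_iff _ graft_adj_inr_inl.symm
  · exact decidable_of_iff _ graft_adj_inr_inr.symm

/-- The inclusion hom of `G` into the graft. -/
def graftInl : G →g graft G H v r where
  toFun := Sum.inl
  map_rel' h := h

/-- The inclusion hom of `H` into the graft. -/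
def graftInr : H →g graft G H v r where
  toFun := Sum.inr
  map_rel' h := h

attribute [reducible] graftInl graftInr

@[simp] lemma graftInl_coe :
    ⇑(graftInl (G := G) (H := H) (v := v) (r := r)) = Sum.inl := rfl
@[simp] lemma graftInr_coe :
    ⇑(graftInr (G := G) (H := H) (v := v) (r := r)) = Sum.inr := rfl

@[simp] lemma graftInl_apply (a : α) :
    (graftInl (G := G) (H := H) (v := v) (r := r)) a = .inl a := rfl
@[simp] lemma graftInr_apply (b : β) :
    (graftInr (G := G) (H := H) (v := v) (r := r)) b = .inr b := rfl

lemma graft_connected (hG : G.Connected) (hH : H.Connected) : (graft G H v r).Connected := by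
  rw [connected_iff_exists_forall_reachable]
  refine ⟨.inl v, ?_⟩
  rintro (a | b)
  · exact (hG.preconnected v a).map (graftInl (v := v) (r := r))
  · have h1 : (graft G H v r).Adj (.inl v) (.inr r) := ⟨rfl, rfl⟩
    exact h1.reachable.trans ((hH.preconnected r b).map (graftInr (v := v) (r := r)))

/-- Walks starting on the left that avoid the cross edge stay on the left. -/
lemma graft_support_isLeft {x y : α ⊕ β} (p : (graft G H v r).Walk x y) (hx : x.isLeft)
    (he : s(Sum.inl v, Sum.inr r) ∉ p.edges) : ∀ z ∈ p.support, z.isLeft := by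
  induction p with
  | nil => intro z hz; rw [Walk.support_nil, List.mem_singleton] at hz; subst hz; exact hx
  | @cons x u y h p ih =>
    obtain ⟨a, rfl⟩ := Sum.isLeft_iff.mp hx
    rw [Walk.edges_cons, List.mem_cons, not_or] at he
    match u, h with
    | .inr b, h =>
      exfalso; obtain ⟨rfl, rfl⟩ := h
      exact he.1 rfl
    | .inl b, h =>
      intro z hz
      rw [Walk.support_cons, List.mem_cons] at hz
      rcases hz with rfl | hz
      · exact hx
      · exact ih rfl he.2 z hz

lemma graft_support_isRight {x y : α ⊕ β} (p : (graft G H v r).Walk x y) (hx : x.isRight)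
    (he : s(Sum.inl v, Sum.inr r) ∉ p.edges) : ∀ z ∈ p.support, z.isRight := by
  induction p with
  | nil => intro z hz; rw [Walk.support_nil, List.mem_singleton] at hz; subst hz; exact hx
  | @cons x u y h p ih =>
    obtain ⟨a, rfl⟩ := Sum.isRight_iff.mp hx
    rw [Walk.edges_cons, List.mem_cons, not_or] at he
    match u, h with
    | .inl b, h =>
      exfalso; obtain ⟨rfl, rfl⟩ := h
      exact he.1 (Sym2.eq_swap)
    | .inr b, h =>
      intro z hz
      rw [Walk.support_cons, List.mem_cons] at hz
      rcases hz with rfl | hz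
      · exact hx
      · exact ih rfl he.2 z hz

lemma graft_cross_isBridge : (graft G H v r).IsBridge s(Sum.inl v, Sum.inr r) := by
  rw [isBridge_iff_adj_and_forall_walk_mem_edges]
  refine fun p => ?_
  by_contra he
  have := graft_support_isLeft p rfl he (Sum.inr r) p.end_mem_support
  simp at this

lemma graft_walk_lift {x y : α ⊕ β} (p : (graft G H v r).Walk x y)
    (he : s(Sum.inl v, Sum.inr r) ∉ p.edges) :
    ∀ {a b : α} (hx : x = .inl a) (hy : y = .inl b),
      ∃ q : G.Walk a b, p.copy hx hy = q.map (graftInl (G := G) (H := H) (v := v) (r := r)) := by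
  induction p with
  | nil =>
    rintro a b rfl hy
    obtain rfl : a = b := by injection hy
    exact ⟨.nil, rfl⟩
  | @cons x u y h p ih =>
    rintro a b rfl rfl
    rw [Walk.edges_cons, List.mem_cons, not_or] at he
    match u, h with
    | .inr c, h =>
      exfalso; obtain ⟨rfl, rfl⟩ := h
      exact he.1 rfl
    | .inl c, h =>
      obtain ⟨q, hq⟩ := ih he.2 rfl rfl
      refine ⟨.cons (graft_adj_inl_inl.mp h) q, ?_⟩
      simp only [Walk.copy_rfl_rfl] at hq ⊢
      rw [Walk.map_cons, ← hq]

lemma graft_walk_lift_right {x y : α ⊕ β} (p : (graft G H v r).Walk x y)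
    (he : s(Sum.inl v, Sum.inr r) ∉ p.edges) :
    ∀ {a b : β} (hx : x = .inr a) (hy : y = .inr b),
      ∃ q : H.Walk a b, p.copy hx hy = q.map (graftInr (G := G) (H := H) (v := v) (r := r)) := by
  induction p with
  | nil =>
    rintro a b rfl hy
    obtain rfl : a = b := by injection hy
    exact ⟨.nil, rfl⟩
  | @cons x u y h p ih =>
    rintro a b rfl rfl
    rw [Walk.edges_cons, List.mem_cons, not_or] at he
    match u, h with
    | .inl c, h =>
      exfalso; obtain ⟨rfl, rfl⟩ := h
      exact he.1 (Sym2.eq_swap)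
    | .inr c, h =>
      obtain ⟨q, hq⟩ := ih he.2 rfl rfl
      refine ⟨.cons (graft_adj_inr_inr.mp h) q, ?_⟩
      simp only [Walk.copy_rfl_rfl] at hq ⊢
      rw [Walk.map_cons, ← hq]

lemma graft_isAcyclic (hG : G.IsAcyclic) (hH : H.IsAcyclic) : (graft G H v r).IsAcyclic := by
  intro x c hc
  have hcross : s(Sum.inl v, Sum.inr r) ∉ c.edges :=
    (isBridge_iff_adj_and_forall_cycle_notMem (G := graft G H v r) (e := s(Sum.inl v, Sum.inr r))
      ((graft_adj_inl_inr (G := G) (H := H)).mpr ⟨rfl, rfl⟩)).mp (graft_cross_isBridge (G := G) (H := H)) c hc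
  match x with
  | .inl a =>
    obtain ⟨q, hq⟩ := graft_walk_lift c hcross rfl rfl
    rw [Walk.copy_rfl_rfl] at hq
    rw [hq] at hc
    exact hG q ((Walk.map_isCycle_iff_of_injective Sum.inl_injective).mp hc)
  | .inr b =>
    obtain ⟨q, hq⟩ := graft_walk_lift_right c hcross rfl rfl
    rw [Walk.copy_rfl_rfl] at hq
    rw [hq] at hc
    exact hH q ((Walk.map_isCycle_iff_of_injective Sum.inr_injective).mp hc)

lemma graft_isTree (hG : G.IsTree) (hH : H.IsTree) : (graft G H v r).IsTree :=
  ⟨graft_connected hG.isConnected hH.isConnected, graft_isAcyclic hG.IsAcyclic hH.IsAcyclic⟩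

section Deg
variable [Fintype α] [Fintype β] [DecidableEq α] [DecidableEq β]
  [DecidableRel G.Adj] [DecidableRel H.Adj]

lemma graft_neighborFinset_inl (a : α) :
    (graft G H v r).neighborFinset (.inl a) =
      (G.neighborFinset a).map ⟨Sum.inl, Sum.inl_injective⟩ ∪
        (if a = v then {Sum.inr r} else ∅) := by
  ext x
  cases x with
  | inl b => by_cases hav : a = v <;> simp [mem_neighborFinset, hav]
  | inr b =>
    by_cases hav : a = v <;> by_cases hbr : b = r <;>
      simp [mem_neighborFinset, hav, hbr]

lemma graft_degree_inl (a : α) :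
    (graft G H v r).degree (.inl a) = G.degree a + (if a = v then 1 else 0) := by
  rw [degree, graft_neighborFinset_inl, Finset.card_union_of_disjoint, Finset.card_map, degree]
  · congr 1
    split <;> simp
  · rw [Finset.disjoint_right]
    intro x hx hmem
    split at hx
    · rw [Finset.mem_singleton] at hx
      subst hx
      simp at hmem
    · simp at hx

lemma graft_neighborFinset_inr (b : β) :
    (graft G H v r).neighborFinset (.inr b) =
      (H.neighborFinset b).map ⟨Sum.inr, Sum.inr_injective⟩ ∪
        (if b = r then {Sum.inl v} else ∅) := by
  ext x
  cases x with
  | inr c => by_cases hbr : b = r <;> simp [mem_neighborFinset, hbr]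
  | inl c =>
    by_cases hbr : b = r <;> by_cases hcv : c = v <;>
      simp [mem_neighborFinset, hbr, hcv]

lemma graft_degree_inr (b : β) :
    (graft G H v r).degree (.inr b) = H.degree b + (if b = r then 1 else 0) := by
  rw [degree, graft_neighborFinset_inr, Finset.card_union_of_disjoint, Finset.card_map, degree]
  · congr 1
    split <;> simp
  · rw [Finset.disjoint_right]
    intro x hx hmem
    split at hx
    · rw [Finset.mem_singleton] at hx
      subst hx
      simp at hmem
    · simp at hx

end Deg

end Graft

/-- The two-vertex complete graph on `Bool` is a tree. -/
lemma top_bool_isTree : (⊤ : SimpleGraph Bool).IsTree := by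
  constructor
  · exact connected_top
  · intro x c hc
    have h3 := hc.three_le_length
    have hnd := hc.2
    have hlen : c.support.tail.length = c.length := by
      rw [List.length_tail, Walk.length_support]
      simp
    have := hnd.length_le_card
    rw [hlen] at this
    simp only [Fintype.card_bool] at this
    omega

lemma my_append_isPath {V : Type} {G : SimpleGraph V} {u v w : V} {p : G.Walk u v}
    {q : G.Walk v w} (hp : p.IsPath) (hq : q.IsPath)
    (hd : ∀ x, x ∈ p.support → x ∈ q.support → x = v) : (p.append q).IsPath := by
  rw [Walk.isPath_def, Walk.support_append]
  apply List.Nodup.append hp.support_nodup (hq.support_nodup.tail)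
  intro x hxp hxq
  have hx : x ∈ q.support := List.mem_of_mem_tail hxq
  obtain rfl := hd x hxp hx
  have hcons : q.support = x :: q.support.tail := (q.support_eq_cons).trans rfl
  have hnd := hq.support_nodup
  rw [hcons, List.nodup_cons] at hnd
  exact hnd.1 hxq
/-! ### Canonical paths in trees -/

/-- The canonical path between two vertices of a tree. -/
noncomputable def FinTree.cpath (T : FinTree) (a b : T.V) : T.G.Walk a b :=
  (T.isTree.existsUnique_path a b).exists.choose

lemma FinTree.cpath_isPath (T : FinTree) (a b : T.V) : (T.cpath a b).IsPath :=
  (T.isTree.existsUnique_path a b).exists.choose_spec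

lemma FinTree.path_eq_cpath (T : FinTree) {a b : T.V} {p : T.G.Walk a b} (hp : p.IsPath) :
    p = T.cpath a b :=
  (T.isTree.existsUnique_path a b).unique hp (T.cpath_isPath a b)

lemma nodup4_iff {γ : Type*} {a b c d : γ} :
    ([a, b, c, d] : List γ).Nodup ↔ a ≠ b ∧ a ≠ c ∧ a ≠ d ∧ b ≠ c ∧ b ≠ d ∧ c ≠ d := by
  simp only [List.nodup_cons, List.mem_cons, List.mem_singleton, List.not_mem_nil,
    or_false, not_or, List.nodup_nil, and_true]
  tauto

lemma nodup4_map {γ δ : Type*} {F : γ → δ} (hF : Function.Injective F) {a b c d : γ} :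
    ([F a, F b, F c, F d] : List δ).Nodup ↔ ([a, b, c, d] : List γ).Nodup := by
  rw [nodup4_iff, nodup4_iff]
  simp only [ne_eq, hF.eq_iff]

/-! ### Symmetries of `pathRel` -/

lemma FinTree.pathRel_swap_pairs {T : FinTree} {x₁ x₂ y₁ y₂ : T.V} :
    T.pathRel x₁ x₂ y₁ y₂ ↔ T.pathRel y₁ y₂ x₁ x₂ := by
  constructor <;> rintro ⟨hnd, p, q, hp, hq, e, hep, heq⟩ <;>
    exact ⟨by rw [nodup4_iff] at hnd ⊢; tauto, q, p, hq, hp, e, heq, hep⟩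

lemma FinTree.pathRel_swap_fst {T : FinTree} {x₁ x₂ y₁ y₂ : T.V} :
    T.pathRel x₁ x₂ y₁ y₂ ↔ T.pathRel x₂ x₁ y₁ y₂ := by
  constructor <;> rintro ⟨hnd, p, q, hp, hq, e, hep, heq⟩ <;>
    exact ⟨by rw [nodup4_iff] at hnd ⊢; tauto, p.reverse, q, by simpa using hp, hq, e,
      by rwa [Walk.edges_reverse, List.mem_reverse], heq⟩

/-! ### The caterpillar extension -/

/-- Data for one new leaf hanging off the extension. -/
structure NewLeaf (T : FinTree) (v : T.V) (U : FinTree) (ι : T.V → U.V) (t : U.V) : Type where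
  pt : U.V
  notι : ∀ a, pt ≠ ι a
  nott : pt ≠ t
  deg : U.G.degree pt = 1
  walk : U.G.Walk pt (ι v)
  path : walk.IsPath
  sup : ∀ a, ι a ∈ walk.support → a = v

/-- An `h`-fold caterpillar extension of the tree `T` at the leaf `v`. -/
structure Ext (T : FinTree) (v : T.V) (n : ℕ) (h : ℕ) : Type 1 where
  U : FinTree
  ι : T.V → U.V
  inj : Function.Injective ι
  adj : ∀ a b, U.G.Adj (ι a) (ι b) ↔ T.G.Adj a b
  t : U.V
  tnotι : ∀ a, a ≠ v → ι a ≠ t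
  σ : U.G.Walk t (ι v)
  σpath : σ.IsPath
  σsup : ∀ a, ι a ∈ σ.support → a = v
  degt : U.G.degree t ≤ 2
  degLe : ∀ u, U.G.degree u ≤ n
  degι : ∀ a, a ≠ v → U.G.degree (ι a) = T.G.degree a
  z : Fin h → NewLeaf T v U ι t
  zinj : ∀ i j : Fin h, (z i).pt = (z j).pt → i = j

/-- The base of the induction: no new leaves. -/
def extZero (T : FinTree) (v : T.V) (n : ℕ) (hv : T.G.degree v ≤ 1) (hT : T.LevelLe n) :
    Ext T v n 0 where
  U := T
  ι := id
  inj := fun _ _ hh => hh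
  adj := fun _ _ => Iff.rfl
  t := v
  tnotι := fun a ha => ha
  σ := Walk.nil
  σpath := Walk.IsPath.nil
  σsup := fun a ha => by simpa using ha
  degt := hv.trans (by norm_num)
  degLe := hT
  degι := fun _ _ => rfl
  z := Fin.elim0
  zinj := fun i => i.elim0

variable {T : FinTree} {v : T.V} {n h : ℕ}

/-- The underlying tree of the one-step extension. -/
abbrev extStep (E : Ext T v n h) : FinTree where
  V := E.U.V ⊕ Bool
  G := graft E.U.G ⊤ E.t false
  adjDec := graft.adjDecidable
  isTree := graft_isTree E.U.isTree top_bool_isTree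

/-- One step of the induction: add one more spine vertex and one more leaf. -/
def extSucc (hn : 3 ≤ n) (E : Ext T v n h) : Ext T v n (h + 1) where
  U := extStep E
  ι := fun a => Sum.inl (E.ι a)
  inj := fun _ _ hh => E.inj (Sum.inl_injective hh)
  adj := fun a b => (graft_adj_inl_inl).trans (E.adj a b)
  t := Sum.inr false
  tnotι := fun _ _ => by simp
  σ := Walk.cons (show (extStep E).G.Adj (Sum.inr false) (Sum.inl E.t) from graft_adj_inr_inl.mpr ⟨rfl, rfl⟩)
        (E.σ.map (graftInl (v := E.t) (r := false)))
  σpath := by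
    rw [Walk.cons_isPath_iff]
    refine ⟨Walk.map_isPath_of_injective Sum.inl_injective E.σpath, ?_⟩
    rw [Walk.support_map]
    rintro hmem
    obtain ⟨x, -, hx⟩ := List.mem_map.mp hmem
    simp only [graftInl_coe] at hx
    exact absurd hx (by simp)
  σsup := by
    intro a ha
    rw [Walk.support_cons, List.mem_cons] at ha
    rcases ha with ha | ha
    · exact absurd ha (by simp)
    · rw [Walk.support_map] at ha
      obtain ⟨x, hx, hxa⟩ := List.mem_map.mp ha
      obtain rfl := Sum.inl_injective hxa
      exact E.σsup _ hx
  degt := by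
    show (graft E.U.G ⊤ E.t false).degree (Sum.inr false) ≤ 2
    rw [graft_degree_inr, complete_graph_degree]
    simp
  degLe := by
    rintro (u | b)
    · show (graft E.U.G ⊤ E.t false).degree (Sum.inl u) ≤ n
      rw [graft_degree_inl]
      have h1 := E.degt
      have h2 := E.degLe u
      split
      · rename_i hu
        rw [hu]
        omega
      · omega
    · show (graft E.U.G ⊤ E.t false).degree (Sum.inr b) ≤ n
      rw [graft_degree_inr, complete_graph_degree]
      have hcb : Fintype.card Bool = 2 := by simp
      split <;> omega
  degι := by
    intro a ha
    show (graft E.U.G ⊤ E.t false).degree (Sum.inl (E.ι a)) = T.G.degree a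
    rw [graft_degree_inl, if_neg (E.tnotι a ha), E.degι a ha]
    omega
  z := Fin.cases
    { pt := Sum.inr true
      notι := fun a => by simp
      nott := fun hc => by
        have := Sum.inr_injective hc
        exact Bool.noConfusion this
      deg := by
        show (graft E.U.G ⊤ E.t false).degree (Sum.inr true) = 1
        rw [graft_degree_inr, complete_graph_degree]
        simp
      walk := Walk.cons (show (extStep E).G.Adj (Sum.inr true) (Sum.inr false) from by simp)
        (Walk.cons (show (extStep E).G.Adj (Sum.inr false) (Sum.inl E.t) from graft_adj_inr_inl.mpr ⟨rfl, rfl⟩)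
          (E.σ.map (graftInl (v := E.t) (r := false))))
      path := by
        rw [Walk.cons_isPath_iff, Walk.cons_isPath_iff]
        refine ⟨⟨Walk.map_isPath_of_injective Sum.inl_injective E.σpath, ?_⟩, ?_⟩
        · rw [Walk.support_map]
          rintro hmem
          obtain ⟨x, -, hx⟩ := List.mem_map.mp hmem
          simp only [graftInl_coe] at hx
          exact absurd hx (by simp)
        · rw [Walk.support_cons, List.mem_cons]
          rintro (hc | hc)
          · simp at hc
          · rw [Walk.support_map] at hc
            obtain ⟨x, -, hx⟩ := List.mem_map.mp hc
            simp only [graftInl_coe] at hx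
            exact absurd hx (by simp)
      sup := by
        intro a ha
        rw [Walk.support_cons, List.mem_cons, Walk.support_cons, List.mem_cons] at ha
        rcases ha with ha | ha | ha
        · exact absurd ha (by simp)
        · exact absurd ha (by simp)
        · rw [Walk.support_map] at ha
          obtain ⟨x, hx, hxa⟩ := List.mem_map.mp ha
          obtain rfl := Sum.inl_injective hxa
          exact E.σsup _ hx }
    (fun i =>
    { pt := Sum.inl (E.z i).pt
      notι := fun a hc => (E.z i).notι a (Sum.inl_injective hc)
      nott := by simp
      deg := by
        show (graft E.U.G ⊤ E.t false).degree (Sum.inl (E.z i).pt) = 1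
        rw [graft_degree_inl, if_neg (E.z i).nott, (E.z i).deg]
      walk := ((E.z i).walk).map (graftInl (v := E.t) (r := false))
      path := Walk.map_isPath_of_injective Sum.inl_injective (E.z i).path
      sup := by
        intro a ha
        rw [Walk.support_map] at ha
        obtain ⟨x, hx, hxa⟩ := List.mem_map.mp ha
        obtain rfl := Sum.inl_injective hxa
        exact (E.z i).sup _ hx })
  zinj := by
    intro i j hij
    induction i using Fin.cases with
    | zero =>
      induction j using Fin.cases with
      | zero => rfl
      | succ j =>
        simp only [Fin.cases_zero, Fin.cases_succ] at hij
        exact absurd hij (by simp)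
    | succ i =>
      induction j using Fin.cases with
      | zero =>
        simp only [Fin.cases_zero, Fin.cases_succ] at hij
        exact absurd hij (by simp)
      | succ j =>
        simp only [Fin.cases_succ] at hij
        rw [E.zinj i j (Sum.inl_injective hij)]

/-- The full caterpillar extension. -/
def extRec (T : FinTree) (v : T.V) (n : ℕ) (hv : T.G.degree v ≤ 1) (hn : 3 ≤ n)
    (hT : T.LevelLe n) : ∀ h : ℕ, Ext T v n h
  | 0 => extZero T v n hv hT
  | h + 1 => extSucc hn (extRec T v n hv hn hT h)
/-! ### Transfer of `pathRel` along the extension -/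

/-- The graph hom underlying an extension. -/
def extHom (E : Ext T v n h) : T.G →g E.U.G := ⟨E.ι, fun hab => (E.adj _ _).mpr hab⟩

attribute [reducible] extHom

@[simp] lemma extHom_coe (E : Ext T v n h) : ⇑(extHom E) = E.ι := rfl

lemma cpath_map (E : Ext T v n h) (a b : T.V) :
    E.U.cpath (E.ι a) (E.ι b) = (T.cpath a b).map (extHom E) :=
  (E.U.path_eq_cpath
    (Walk.map_isPath_of_injective (f := extHom E) E.inj (T.cpath_isPath a b))).symm

lemma pathRel_map (E : Ext T v n h) {a b c d : T.V} :
    E.U.pathRel (E.ι a) (E.ι b) (E.ι c) (E.ι d) ↔ T.pathRel a b c d := by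
  constructor
  · rintro ⟨hnd, p, q, hp, hq, e, hep, heq⟩
    refine ⟨(nodup4_map E.inj).mp hnd, T.cpath a b, T.cpath c d, T.cpath_isPath a b,
      T.cpath_isPath c d, ?_⟩
    rw [E.U.path_eq_cpath hp, cpath_map] at hep
    rw [E.U.path_eq_cpath hq, cpath_map] at heq
    rw [Walk.edges_map] at hep heq
    obtain ⟨e₁, he₁, rfl⟩ := List.mem_map.mp hep
    obtain ⟨e₂, he₂, he⟩ := List.mem_map.mp heq
    simp only [extHom_coe] at he
    obtain rfl := Sym2.map.injective E.inj he
    exact ⟨_, he₁, he₂⟩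
  · rintro ⟨hnd, p, q, hp, hq, e, hep, heq⟩
    refine ⟨(nodup4_map E.inj).mpr hnd, p.map (extHom E), q.map (extHom E),
      Walk.map_isPath_of_injective E.inj hp, Walk.map_isPath_of_injective E.inj hq,
      Sym2.map E.ι e, ?_, ?_⟩ <;> rw [Walk.edges_map] <;>
      exact List.mem_map_of_mem ‹_›

/-- The canonical walk from the `i`-th new leaf to (the copy of) the vertex `x`. -/
noncomputable def zwalk (E : Ext T v n h) (i : Fin h) (x : T.V) :
    E.U.G.Walk (E.z i).pt (E.ι x) :=
  ((E.z i).walk).append ((T.cpath v x).map (extHom E))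

lemma zwalk_isPath (E : Ext T v n h) (i : Fin h) (x : T.V) : (zwalk E i x).IsPath := by
  apply my_append_isPath (E.z i).path
    (Walk.map_isPath_of_injective E.inj (T.cpath_isPath v x))
  intro y hy1 hy2
  rw [Walk.support_map] at hy2
  obtain ⟨a, ha, rfl⟩ := List.mem_map.mp hy2
  obtain rfl := (E.z i).sup a hy1
  rfl

lemma pathRel_z (E : Ext T v n h) (i : Fin h) {x c d : T.V}
    (hx : x ≠ v) (hc : c ≠ v) (hd : d ≠ v) :
    E.U.pathRel (E.z i).pt (E.ι x) (E.ι c) (E.ι d) ↔ T.pathRel v x c d := by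
  have hptι : ∀ a, (E.z i).pt ≠ E.ι a := (E.z i).notι
  constructor
  · rintro ⟨hnd, p, q, hp, hq, e, hep, heq⟩
    have hndT : ([v, x, c, d] : List T.V).Nodup := by
      rw [nodup4_iff] at hnd ⊢
      simp only [ne_eq, E.inj.eq_iff] at hnd
      exact ⟨Ne.symm hx, Ne.symm hc, Ne.symm hd, hnd.2.2.2⟩
    refine ⟨hndT, T.cpath v x, T.cpath c d, T.cpath_isPath _ _, T.cpath_isPath _ _, ?_⟩
    rw [E.U.path_eq_cpath hp, ← E.U.path_eq_cpath (zwalk_isPath E i x)] at hep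
    rw [E.U.path_eq_cpath hq, cpath_map, Walk.edges_map] at heq
    obtain ⟨e₂, he₂, rfl⟩ := List.mem_map.mp heq
    rw [zwalk, Walk.edges_append, List.mem_append] at hep
    rcases hep with hep | hep
    · exfalso
      induction e₂ using Sym2.ind with
      | _ a₁ a₂ =>
        rw [Sym2.map_pair_eq] at hep
        have h1 := Walk.fst_mem_support_of_mem_edges _ hep
        have h2 := Walk.snd_mem_support_of_mem_edges _ hep
        rw [(E.z i).sup a₁ h1, (E.z i).sup a₂ h2] at he₂
        exact T.G.loopless.irrefl v (Walk.adj_of_mem_edges _ he₂)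
    · rw [Walk.edges_map] at hep
      obtain ⟨e₁, he₁, he⟩ := List.mem_map.mp hep
      simp only [extHom_coe] at he
      obtain rfl := Sym2.map.injective E.inj he
      exact ⟨_, he₁, he₂⟩
  · rintro ⟨hnd, p, q, hp, hq, e, hep, heq⟩
    have hndU : ([(E.z i).pt, E.ι x, E.ι c, E.ι d] : List E.U.V).Nodup := by
      rw [nodup4_iff] at hnd ⊢
      simp only [ne_eq, E.inj.eq_iff]
      exact ⟨hptι x, hptι c, hptι d, hnd.2.2.2⟩
    refine ⟨hndU, zwalk E i x, q.map (extHom E), zwalk_isPath E i x,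
      Walk.map_isPath_of_injective E.inj hq, Sym2.map E.ι e, ?_, ?_⟩
    · rw [zwalk, Walk.edges_append, List.mem_append]
      right
      rw [T.path_eq_cpath hp] at hep
      rw [Walk.edges_map]
      exact List.mem_map_of_mem hep
    · rw [Walk.edges_map]
      exact List.mem_map_of_mem heq

/-! ### The leaf-structure embeddings -/

/-- The map on vertices sending `v` to the `i`-th new leaf and every other vertex to
its copy. -/
def gv (E : Ext T v n h) (i : Fin h) : T.V → E.U.V :=
  fun x => if x = v then (E.z i).pt else E.ι x

lemma gv_inj (E : Ext T v n h) (i : Fin h) : Function.Injective (gv E i) := by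
  intro x y hxy
  by_cases h1 : x = v <;> by_cases h2 : y = v <;>
    simp only [gv, h1, h2, if_pos, if_neg, if_true, if_false] at hxy
  · rw [h1, h2]
  · exact absurd hxy ((E.z i).notι y)
  · exact absurd hxy.symm ((E.z i).notι x)
  · exact E.inj hxy

lemma gv_ne (E : Ext T v n h) (i : Fin h) {x : T.V} (hx : x ≠ v) : gv E i x = E.ι x := by
  simp only [gv, if_neg hx]

lemma gv_v (E : Ext T v n h) (i : Fin h) : gv E i v = (E.z i).pt := by
  simp [gv]

/-- The embedding of leaf structures sending the leaf `v` to the `i`-th new leaf. -/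
def leafEmb (E : Ext T v n h) (hv : T.IsLeaf v) (i : Fin h) :
    Emb T.leafStruc E.U.leafStruc where
  toFun ℓ := ⟨gv E i ℓ.1, by
    show E.U.G.degree (gv E i ℓ.1) ≤ 1
    by_cases hl : ℓ.1 = v
    · rw [hl, gv_v, (E.z i).deg]
    · rw [gv_ne E i hl, E.degι _ hl]
      exact ℓ.2⟩
  inj := fun a b hab => Subtype.ext (gv_inj E i (congrArg Subtype.val hab))
  rel_iff := by
    intro _ w
    show E.U.pathRel (gv E i (w 0).1) (gv E i (w 1).1) (gv E i (w 2).1) (gv E i (w 3).1) ↔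
      T.pathRel (w 0).1 (w 1).1 (w 2).1 (w 3).1
    by_cases hnd : ([(w 0).1, (w 1).1, (w 2).1, (w 3).1] : List T.V).Nodup
    case neg =>
      constructor
      · rintro ⟨hnd', -⟩
        exact absurd ((nodup4_map (gv_inj E i)).mp hnd') hnd
      · rintro ⟨hnd', -⟩
        exact absurd hnd' hnd
    case pos =>
      rw [nodup4_iff] at hnd
      obtain ⟨h01, h02, h03, h12, h13, h23⟩ := hnd
      by_cases h0 : (w 0).1 = v
      · have h1 : (w 1).1 ≠ v := fun hh => h01 (h0.trans hh.symm)
        have h2 : (w 2).1 ≠ v := fun hh => h02 (h0.trans hh.symm)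
        have h3 : (w 3).1 ≠ v := fun hh => h03 (h0.trans hh.symm)
        rw [h0, gv_v, gv_ne E i h1, gv_ne E i h2, gv_ne E i h3]
        exact pathRel_z E i h1 h2 h3
      by_cases h1 : (w 1).1 = v
      · have h2 : (w 2).1 ≠ v := fun hh => h12 (h1.trans hh.symm)
        have h3 : (w 3).1 ≠ v := fun hh => h13 (h1.trans hh.symm)
        rw [h1, gv_v, gv_ne E i h0, gv_ne E i h2, gv_ne E i h3]
        exact FinTree.pathRel_swap_fst.trans
          ((pathRel_z E i h0 h2 h3).trans FinTree.pathRel_swap_fst)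
      by_cases h2 : (w 2).1 = v
      · have h3 : (w 3).1 ≠ v := fun hh => h23 (h2.trans hh.symm)
        rw [h2, gv_v, gv_ne E i h0, gv_ne E i h1, gv_ne E i h3]
        exact FinTree.pathRel_swap_pairs.trans
          ((pathRel_z E i h3 h0 h1).trans FinTree.pathRel_swap_pairs)
      by_cases h3 : (w 3).1 = v
      · rw [h3, gv_v, gv_ne E i h0, gv_ne E i h1, gv_ne E i h2]
        exact FinTree.pathRel_swap_pairs.trans (FinTree.pathRel_swap_fst.trans
          ((pathRel_z E i h2 h0 h1).trans
            (FinTree.pathRel_swap_fst.trans FinTree.pathRel_swap_pairs)))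
      · rw [gv_ne E i h0, gv_ne E i h1, gv_ne E i h2, gv_ne E i h3]
        exact pathRel_map E

lemma Emb.ext' {σ : Signature} {X Y : Struc σ} {f g : Emb X Y} (hfg : f.toFun = g.toFun) :
    f = g := by
  cases f; cases g; cases hfg; rfl

lemma leaf_emb (T : FinTree) {n h : ℕ} (hn : 3 ≤ n) (hT : T.LevelLe n)
    (v : T.V) (hv : T.IsLeaf v) (hh : 0 < h) :
    ∃ U : FinTree, U.LevelLe n ∧ ∃ g : Fin h → Emb T.leafStruc U.leafStruc,
      Function.Injective g ∧
      ∀ (i : Fin h) (ℓ : T.leafStruc.carrier), ℓ.1 ≠ v →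
        (g i).toFun ℓ = (g ⟨0, hh⟩).toFun ℓ := by
  have E := extRec T v n hv hn hT h
  refine ⟨E.U, E.degLe, fun i => leafEmb E hv i, ?_, ?_⟩
  · intro i j hij
    have hval := congrArg
      (fun F : Emb T.leafStruc E.U.leafStruc => (F.toFun ⟨v, hv⟩).1) hij
    simp only [leafEmb, gv_v] at hval
    exact E.zinj i j hval
  · intro i ℓ hℓ
    apply Subtype.ext
    show gv E i ℓ.1 = gv E ⟨0, hh⟩ ℓ.1
    rw [gv_ne E i hℓ, gv_ne E _ hℓ]

/-- **(SS2) for `𝔗_n`** (Lemma 5.4): given a tree structure `Y ∈ 𝔗_n`, a proper induced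
substructure `X` of `Y`, and `h ≥ 1`, there are `Z ∈ 𝔗_n` and an embedding `j : X → Z`
admitting at least `h` pairwise distinct extensions to embeddings `Y → Z`. -/
theorem exists_many_extensions (n : ℕ) (hn : 3 ≤ n)
    (Y : Struc treeSig) (hY : Y ∈ TreeClassN n)
    (S : Set Y.carrier) (hS : S ≠ Set.univ) (h : ℕ) (hh : 1 ≤ h) :
    ∃ Z : Struc treeSig, Z ∈ TreeClassN n ∧
      ∃ j : Emb (Y.restrict S) Z, ∃ f : Fin h → Emb Y Z,
        Function.Injective f ∧
        ∀ (α : Fin h) (x : (Y.restrict S).carrier),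
          (f α).toFun ((Y.subEmb S).toFun x) = j.toFun x := by
  obtain ⟨y₀, hy₀⟩ := Set.ne_univ_iff_exists_notMem S |>.mp hS
  rcases hY with hempty | ⟨T, hT, e, hesurj⟩
  · exact (hempty.false y₀).elim
  · have vleaf := e.toFun y₀
    obtain ⟨U, hU, g, ginj, gagree⟩ :=
      leaf_emb T hn hT (e.toFun y₀).1 (e.toFun y₀).2 hh
    refine ⟨U.leafStruc, Or.inr ⟨U, hU, strucIso_refl _⟩,
      Emb.comp (Emb.comp (g ⟨0, hh⟩) e) (Y.subEmb S), fun i => Emb.comp (g i) e, ?_, ?_⟩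
    · intro i j hij
      apply ginj
      apply Emb.ext'
      funext ℓ
      obtain ⟨y, rfl⟩ := hesurj ℓ
      exact congrFun (congrArg Emb.toFun hij) y
    · intro i x
      show (g i).toFun (e.toFun x.1) = (g ⟨0, hh⟩).toFun (e.toFun x.1)
      apply gagree
      intro hval
      apply hy₀
      have h1 : e.toFun x.1 = e.toFun y₀ := Subtype.ext hval
      have h2 : x.1 = y₀ := e.inj h1
      rw [← h2]
      exact x.2

end Paper
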